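/- Let A be a CDGA over R with a flat right connection ∇ = (∇_2, ∇_3, ...). Given a strict (−2)-shifted Poisson structure π ∈ Hom_A(Ω^2_A, A)[2] (satisfying δπ = 0 and [π,π] = 0 for the Schouten bracket) with D^∇(π) computed in DR^r(A,∇), the element ħπ is a Maurer–Cartan element of the L∞-algebra (ħ DR^r(A,∇)⟦ħ⟧[−1], [−]_∇) (i.e. satisfies the quantum master equation D^∇(e^{ħπ}) = 0) if and only if D^∇_k((ħπ)^n/n!) summed appropriately vanishes; in particular when ∇ has no higher terms (∇_k = 0 for k ≥ 3) and ∇π = 0, then ħπ solves the quantum master equation. -/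

import Mathlib

/-!  STATEMENT 9: Let `A` be a CDGA with a flat right connection `∇` and let `π` be a
strict (−2)-shifted Poisson structure (`δπ = 0`, `[π,π] = 0` for the Schouten bracket,
here combined into `D^∇(π) = 0` and the vanishing of the BV bracket `[π,π]_□`).  The
element `ħπ` satisfies the quantum master equation `D^∇(e^{ħπ}) = 0` if and only if the
coefficientwise sums `D^∇(π^n)` all vanish; in particular, when `∇` has no higher terms
(so the total operator `□ = D^∇` is a differential operator of order ≤ 2) and
`∇π = 0`, then `ħπ` solves the quantum master equation.

We model the right de Rham complex by a commutative ℚ-algebra `B` (the degrees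
collapsed; `π` has even total degree) with the square-zero operator `□ = D^∇`, and
`ħ`-power series by `PowerSeries B`, with `exp(ħπ) = Σ_n (π^n/n!) ħ^n`. -/

theorem stmt9
    (B : Type*) [CommRing B] [Algebra ℚ B]
    (box : B →ₗ[ℚ] B)
    -- flatness: `□² = 0`
    (hsq : ∀ x, box (box x) = 0)
    (hone : box 1 = 0)
    -- `∇` has no higher terms: `□` is a differential operator of order ≤ 2
    (horder : ∀ a b c x : B,
      box (a * b * c * x) - a * box (b * c * x) - b * box (a * c * x)
        - c * box (a * b * x) + a * b * box (c * x) + a * c * box (b * x)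
        + b * c * box (a * x) - a * b * c * box x = 0)
    (π : B)
    -- `D^∇(π) = 0` (strictness: `δπ = 0` and `∇π = 0`)
    (hδπ : box π = 0)
    -- `[π,π] = 0`: the Schouten/BV bracket of `π` with itself vanishes
    (hbr : box (π * π) - box π * π - π * box π = 0) :
    -- `□` extended coefficientwise to `B⟦ħ⟧`
    let boxh : PowerSeries B → PowerSeries B :=
      fun f => PowerSeries.mk fun n => box (PowerSeries.coeff n f)
    -- `exp(ħπ)`
    let expπ : PowerSeries B := PowerSeries.mk fun n => (n.factorial : ℚ)⁻¹ • π ^ n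
    -- the QME holds iff each `□(π^n)` vanishes, and it does hold:
    (boxh expπ = 0 ↔ ∀ n : ℕ, box (π ^ n) = 0) ∧ boxh expπ = 0 := by
  intro boxh expπ
  -- key: all powers are killed by box
  have key : ∀ n : ℕ, box (π ^ n) = 0 := by
    intro n
    induction n using Nat.strong_induction_on with
    | _ n ih =>
      match n with
      | 0 => simpa using hone
      | 1 => simpa using hδπ
      | 2 =>
        have h2 : box (π * π) = 0 := by
          have := hbr
          rw [hδπ] at this
          simpa using this
        simpa [pow_two] using h2
      | (m+3) =>
        have h := horder π π π (π ^ m)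
        have e0 : π * π * π * π ^ m = π ^ (m + 3) := by ring
        have e1 : π * π * π ^ m = π ^ (m + 2) := by ring
        have e2 : π * π ^ m = π ^ (m + 1) := by ring
        rw [e0, e1, e2, ih m (by omega), ih (m+1) (by omega), ih (m+2) (by omega)] at h
        simpa using h
  have hiff : boxh expπ = 0 ↔ ∀ n : ℕ, box (π ^ n) = 0 := by
    constructor
    · intro h n
      have hc := congrArg (PowerSeries.coeff n) h
      simp only [boxh, expπ, PowerSeries.coeff_mk, map_smul, map_zero] at hc
      have : ((n.factorial : ℚ)) • ((n.factorial : ℚ)⁻¹ • box (π ^ n)) = 0 := by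
        rw [hc, smul_zero]
      rwa [smul_smul, mul_inv_cancel₀ (by exact_mod_cast n.factorial_ne_zero), one_smul] at this
    · intro h
      ext n
      simp [boxh, expπ, h n]
  exact ⟨hiff, hiff.mpr key⟩
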